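/- Let W be a Banach space, T > 0, and let G : [0,T] → L(W) be strongly continuous with G(0) = I, G(t) compact for every t ∈ (0,T], and t ↦ G(t) operator-norm continuous on (0,T]. Define 𝒢 : L¹([0,T];W) → C([0,T];W) by (𝒢 g)(t) = ∫₀ᵗ G(t−s) g(s) ds. If (gₙ)ₙ ⊂ L¹([0,T];W) is integrably bounded, i.e., there exists φ ∈ L¹([0,T];ℝ₊) with ‖gₙ(t)‖_W ≤ φ(t) for a.e. t ∈ [0,T] and all n, then the sequence (𝒢 gₙ)ₙ is relatively compact in C([0,T];W). -/

import Mathlib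

open MeasureTheory Set

set_option linter.unusedSectionVars false
set_option maxHeartbeats 1000000

section Stmt17Aux

variable {W : Type*} [NormedAddCommGroup W] [NormedSpace ℝ W] [CompleteSpace W]

lemma totallyBounded_of_approx {s : Set W}
    (h : ∀ ε : ℝ, 0 < ε → ∃ B : Set W, TotallyBounded B ∧ ∀ x ∈ s, ∃ b ∈ B, dist x b ≤ ε) :
    TotallyBounded s := by
  rw [Metric.totallyBounded_iff]
  intro ε hε
  obtain ⟨B, hB, happrox⟩ := h (ε/4) (by linarith)
  obtain ⟨t, htfin, hcov⟩ := Metric.totallyBounded_iff.mp hB (ε/2) (by linarith)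
  refine ⟨t, htfin, fun x hx => ?_⟩
  obtain ⟨b, hbB, hxb⟩ := happrox x hx
  obtain ⟨y, hyt, hby⟩ := Set.mem_iUnion₂.mp (hcov hbB)
  refine Set.mem_iUnion₂.mpr ⟨y, hyt, ?_⟩
  have : dist x y ≤ dist x b + dist b y := dist_triangle x b y
  rw [Metric.mem_ball] at hby ⊢
  linarith [hxb, hby]

/-- A norm-compact family of compact operators is collectively compact on the unit ball. -/

lemma totallyBounded_apply_image {K : Set (W →L[ℝ] W)} (hK : IsCompact K)
    (hc : ∀ A ∈ K, IsCompactOperator (⇑A)) :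
    TotallyBounded ((fun p : (W →L[ℝ] W) × W => p.1 p.2) ''
      (K ×ˢ Metric.closedBall (0 : W) 1)) := by
  apply totallyBounded_of_approx
  intro ε hε
  -- finite ε-net inside K
  obtain ⟨t, htK, htfin, hcov⟩ := (totallyBounded_iff_subset.mp hK.totallyBounded)
    {p : (W →L[ℝ] W) × (W →L[ℝ] W) | dist p.1 p.2 < ε} (Metric.dist_mem_uniformity hε)
  refine ⟨⋃ A ∈ t, closure (⇑A '' Metric.closedBall (0 : W) 1), ?_, ?_⟩
  · apply totallyBounded_biUnion htfin |>.mpr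
    intro A hA
    have hcA : IsCompactOperator ⇑((A : W →ₗ[ℝ] W)) := hc A (htK hA)
    have := hcA.isCompact_closure_image_closedBall (𝕜₁ := ℝ) 1
    exact this.totallyBounded
  · rintro x ⟨⟨A, w⟩, ⟨hAK, hw⟩, rfl⟩
    obtain ⟨A', hA't, hAA'⟩ := Set.mem_iUnion₂.mp (hcov hAK)
    refine ⟨A' w, Set.mem_iUnion₂.mpr ⟨A', hA't, subset_closure ⟨w, hw, rfl⟩⟩, ?_⟩
    have hw1 : ‖w‖ ≤ 1 := by simpa using hw
    calc dist (A w) (A' w) = ‖(A - A') w‖ := by rw [dist_eq_norm]; simp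
    _ ≤ ‖A - A'‖ * ‖w‖ := (A - A').le_opNorm w
    _ ≤ ε * 1 := by
        apply mul_le_mul _ hw1 (norm_nonneg _) (le_of_lt hε)
        have : dist A A' < ε := hAA'
        rw [dist_eq_norm] at this; exact this.le
    _ = ε := mul_one ε

lemma aesm_integrand {T : ℝ} {G : ℝ → W →L[ℝ] W}
    (hGnorm : ContinuousOn G (Set.Ioc 0 T))
    {f : ℝ → W} (hf : AEStronglyMeasurable f (volume.restrict (Icc 0 T)))
    {t : ℝ} (ht : t ∈ Icc (0:ℝ) T) :
    AEStronglyMeasurable (fun s => G (t - s) (f s)) (volume.restrict (Ioc 0 t)) := by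
  have hres : volume.restrict (Ioc (0:ℝ) t) = volume.restrict (Ioo (0:ℝ) t) :=
    (Measure.restrict_congr_set Ioo_ae_eq_Ioc).symm
  rw [hres]
  have hB : ContinuousOn (fun s => G (t - s)) (Ioo 0 t) := by
    apply hGnorm.comp (Continuous.continuousOn (by fun_prop))
    intro s hs
    exact ⟨by simp [hs.2], by nlinarith [hs.1, ht.2, hs.2]⟩
  have hBm : AEStronglyMeasurable (fun s => G (t - s)) (volume.restrict (Ioo 0 t)) :=
    hB.aestronglyMeasurable measurableSet_Ioo
  have hf' : AEStronglyMeasurable f (volume.restrict (Ioo 0 t)) := by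
    apply hf.mono_measure
    apply Measure.restrict_mono _ le_rfl
    intro s hs
    exact ⟨hs.1.le, le_trans hs.2.le ht.2⟩
  exact (isBoundedBilinearMap_apply (𝕜 := ℝ) (E := W) (F := W)).continuous.comp_aestronglyMeasurable
    (hBm.prodMk hf')

lemma integrableOn_integrand {T : ℝ} {G : ℝ → W →L[ℝ] W}
    (hGnorm : ContinuousOn G (Set.Ioc 0 T))
    {M : ℝ} (hM : ∀ r ∈ Icc (0:ℝ) T, ‖G r‖ ≤ M)
    {f : ℝ → W} (hf : AEStronglyMeasurable f (volume.restrict (Icc 0 T)))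
    {φ : ℝ → ℝ} (hφ : Integrable φ (volume.restrict (Icc 0 T)))
    (hb : ∀ᵐ s ∂(volume.restrict (Icc 0 T)), ‖f s‖ ≤ φ s)
    {t : ℝ} (ht : t ∈ Icc (0:ℝ) T) :
    IntegrableOn (fun s => G (t - s) (f s)) (Ioc 0 t) volume := by
  have hM0 : 0 ≤ M := le_trans (norm_nonneg (G 0)) (hM 0 ⟨le_rfl, ht.1.trans ht.2⟩)
  have hsub : Ioc (0:ℝ) t ⊆ Icc 0 T := fun s hs => ⟨hs.1.le, hs.2.trans ht.2⟩
  have hdom : Integrable (fun s => M * φ s) (volume.restrict (Ioc 0 t)) := by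
    exact (hφ.mono_measure (Measure.restrict_mono hsub le_rfl)).const_mul M
  apply Integrable.mono' hdom (aesm_integrand hGnorm hf ht)
  filter_upwards [ae_restrict_mem measurableSet_Ioc,
    ae_restrict_of_ae_restrict_of_subset hsub hb] with s hs hfs
  calc ‖G (t - s) (f s)‖ ≤ ‖G (t - s)‖ * ‖f s‖ := (G (t-s)).le_opNorm (f s)
  _ ≤ M * φ s := by
      apply mul_le_mul _ hfs (norm_nonneg _) hM0
      exact hM _ ⟨by linarith [hs.2, hs.1], by linarith [hs.2, ht.2, hs.1]⟩

lemma exists_primitive {T : ℝ} {φ : ℝ → ℝ} (hφ : Integrable φ (volume.restrict (Icc 0 T)))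
    (hφpos : ∀ s, 0 ≤ φ s) :
    ∃ Φ : ℝ → ℝ, Continuous Φ ∧ Monotone Φ ∧
      (∀ x y, 0 ≤ x → x ≤ y → y ≤ T → ∫ s in Ioc x y, φ s = Φ y - Φ x) := by
  set φb : ℝ → ℝ := Set.indicator (Icc 0 T) φ with hφb_def
  have hφb_int : Integrable φb volume := by
    rw [hφb_def, integrable_indicator_iff measurableSet_Icc]
    exact hφ
  set Φ : ℝ → ℝ := fun x => ∫ u in (0:ℝ)..x, φb u with hΦ_def
  have hΦcont : Continuous Φ :=
    intervalIntegral.continuous_primitive (fun a b => hφb_int.intervalIntegrable) 0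
  have hdiff : ∀ x y : ℝ, x ≤ y → Φ y - Φ x = ∫ s in Ioc x y, φb s := by
    intro x y hxy
    rw [hΦ_def]
    rw [intervalIntegral.integral_interval_sub_left hφb_int.intervalIntegrable
      hφb_int.intervalIntegrable, intervalIntegral.integral_of_le hxy]
  refine ⟨Φ, hΦcont, ?_, ?_⟩
  · intro x y hxy
    have := hdiff x y hxy
    have hnn : 0 ≤ ∫ s in Ioc x y, φb s :=
      setIntegral_nonneg measurableSet_Ioc fun s _ => Set.indicator_nonneg (fun u _ => hφpos u) s
    linarith
  · intro x y hx hxy hyT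
    rw [hdiff x y hxy]
    apply setIntegral_congr_fun measurableSet_Ioc
    intro s hs
    exact (Set.indicator_of_mem (show s ∈ Icc 0 T from ⟨hx.trans hs.1.le, hs.2.trans hyT⟩) φ).symm

lemma pointwise_totallyBounded {T : ℝ} {G : ℝ → W →L[ℝ] W}
    (hGcpt : ∀ r ∈ Set.Ioc (0:ℝ) T, IsCompactOperator (⇑(G r)))
    (hGnorm : ContinuousOn G (Set.Ioc 0 T))
    {M : ℝ} (hM : ∀ r ∈ Icc (0:ℝ) T, ‖G r‖ ≤ M)
    {φ : ℝ → ℝ} (hφ : Integrable φ (volume.restrict (Icc 0 T))) (hφpos : ∀ s, 0 ≤ φ s)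
    {t : ℝ} (ht : t ∈ Icc (0:ℝ) T) :
    TotallyBounded {w : W | ∃ f : ℝ → W,
      AEStronglyMeasurable f (volume.restrict (Icc 0 T)) ∧
      (∀ᵐ s ∂(volume.restrict (Icc 0 T)), ‖f s‖ ≤ φ s) ∧
      w = ∫ s in Ioc (0:ℝ) t, G (t - s) (f s)} := by
  have hM0 : 0 ≤ M := le_trans (norm_nonneg (G 0)) (hM 0 ⟨le_rfl, ht.1.trans ht.2⟩)
  rcases eq_or_lt_of_le ht.1 with h0 | h0
  · -- t = 0 : the set is {0}
    apply TotallyBounded.subset _ (totallyBounded_singleton (0:W))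
    rintro w ⟨f, hf, hb, rfl⟩
    simp [← h0]
  -- t > 0
  obtain ⟨Φ, hΦc, hΦm, hΦd⟩ := exists_primitive hφ hφpos
  apply totallyBounded_of_approx
  intro ε hε
  -- choose δ
  have hcont := Metric.continuousAt_iff.mp (hΦc.continuousAt (x := t))
  obtain ⟨δ₀, hδ₀, hδ₀p⟩ := hcont (ε / (2 * (M + 1))) (by positivity)
  set δ : ℝ := min (δ₀ / 2) (t / 2) with hδ_def
  have hδpos : 0 < δ := lt_min (by linarith) (by linarith)
  have hδt : δ < t := lt_of_le_of_lt (min_le_right _ _) (by linarith)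
  have hδT : δ ≤ T := le_trans hδt.le ht.2
  set c : ℝ := t - δ with hc_def
  have hc0 : 0 < c := by simp [hc_def]; linarith
  have hcT : c ≤ T := by simp [hc_def]; nlinarith [ht.2]
  -- the compact family and collectively compact set
  have hKsub : Icc δ T ⊆ Ioc 0 T := fun r hr => ⟨lt_of_lt_of_le hδpos hr.1, hr.2⟩
  have hKcpt : IsCompact (G '' Icc δ T) :=
    isCompact_Icc.image_of_continuousOn (hGnorm.mono hKsub)
  have hS₁ : TotallyBounded ((fun p : (W →L[ℝ] W) × W => p.1 p.2) ''
      ((G '' Icc δ T) ×ˢ Metric.closedBall (0 : W) 1)) := by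
    apply totallyBounded_apply_image hKcpt
    rintro A ⟨r, hr, rfl⟩
    exact hGcpt r (hKsub hr)
  set S₁ := (fun p : (W →L[ℝ] W) × W => p.1 p.2) ''
      ((G '' Icc δ T) ×ˢ Metric.closedBall (0 : W) 1) with hS₁def
  set D := closure (convexHull ℝ (insert (0:W) S₁)) with hD_def
  have hDtb : TotallyBounded D := by
    rw [hD_def, totallyBounded_closure]
    apply totallyBounded_convexHull.mpr
    rw [Set.insert_eq]
    exact (totallyBounded_singleton _).union hS₁
  have hDcpt : IsCompact D := TotallyBounded.isCompact_of_isClosed hDtb isClosed_closure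
  have hD0 : (0:W) ∈ D := subset_closure (subset_convexHull ℝ _ (Set.mem_insert _ _))
  have hDconv : Convex ℝ D := (convex_convexHull ℝ _).closure
  -- the approximating compact set
  set CC : ℝ := Φ T - Φ 0 with hCC_def
  have hCC0 : 0 ≤ CC := by have := hΦm (le_trans ht.1 ht.2); simp [hCC_def]; linarith [hΦm (show (0:ℝ) ≤ T from le_trans ht.1 ht.2)]
  set B := (fun p : ℝ × W => p.1 • p.2) '' (Icc (0:ℝ) CC ×ˢ D) with hB_def
  have hBcpt : IsCompact B := (isCompact_Icc.prod hDcpt).image continuous_smul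
  refine ⟨B, hBcpt.totallyBounded, ?_⟩
  rintro w ⟨f, hfm, hfb, rfl⟩
  -- split the integral
  have hint_b : IntegrableOn (fun s => G (t - s) (f s)) (Ioc 0 t) volume :=
    integrableOn_integrand hGnorm hM hfm hφ hfb ht
  have hint₁ : IntegrableOn (fun s => G (t - s) (f s)) (Ioc 0 c) volume :=
    hint_b.mono_set (Ioc_subset_Ioc le_rfl (by linarith))
  have hint₂ : IntegrableOn (fun s => G (t - s) (f s)) (Ioc c t) volume :=
    hint_b.mono_set (Ioc_subset_Ioc hc0.le le_rfl)
  have hsplit : (∫ s in Ioc (0:ℝ) t, G (t - s) (f s)) =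
      (∫ s in Ioc (0:ℝ) c, G (t - s) (f s)) + ∫ s in Ioc c t, G (t - s) (f s) := by
    rw [← setIntegral_union (Set.Ioc_disjoint_Ioc_of_le le_rfl) measurableSet_Ioc hint₁ hint₂,
      Set.Ioc_union_Ioc_eq_Ioc hc0.le (by linarith)]
  set I₁ := ∫ s in Ioc (0:ℝ) c, G (t - s) (f s) with hI₁def
  refine ⟨I₁, ?_, ?_⟩
  · -- I₁ ∈ B : with-density average argument
    set μc := volume.restrict (Ioc (0:ℝ) c) with hμc_def
    have hsub1 : Ioc (0:ℝ) c ⊆ Icc 0 T := fun s hs => ⟨hs.1.le, hs.2.trans hcT⟩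
    have hμc_le : μc ≤ volume.restrict (Icc 0 T) := Measure.restrict_mono hsub1 le_rfl
    have hφm : AEMeasurable (fun s => Real.toNNReal (φ s)) μc :=
      measurable_real_toNNReal.comp_aemeasurable
        ((hφ.aemeasurable).mono_measure hμc_le)
    set ν := μc.withDensity (fun s => (Real.toNNReal (φ s) : ENNReal)) with hν_def
    set y : ℝ → W := fun s => if φ s = 0 then 0 else (φ s)⁻¹ • (G (t - s) (f s)) with hy_def
    have hbc : ∀ᵐ s ∂μc, ‖f s‖ ≤ φ s := ae_restrict_of_ae_restrict_of_subset hsub1 hfb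
    have hmemc : ∀ᵐ s ∂μc, s ∈ Ioc (0:ℝ) c := ae_restrict_mem measurableSet_Ioc
    -- the integrand is φ • y a.e.
    have hEq : ∀ᵐ s ∂μc, G (t - s) (f s) = Real.toNNReal (φ s) • y s := by
      filter_upwards [hbc] with s hs
      by_cases h : φ s = 0
      · have : f s = 0 := norm_le_zero_iff.mp (h ▸ hs)
        simp [hy_def, h, this]
      · have hpos : 0 < φ s := lt_of_le_of_ne (hφpos s) (Ne.symm h)
        simp only [hy_def, if_neg h]
        rw [NNReal.smul_def, Real.coe_toNNReal _ (hφpos s)]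
        rw [smul_inv_smul₀ h]
    -- a.e. membership of y in D
    have hyD : ∀ᵐ s ∂ν, y s ∈ D := by
      apply (withDensity_absolutelyContinuous μc _).ae_le
      filter_upwards [hbc, hmemc] with s hs hsm
      by_cases h : φ s = 0
      · simp only [hy_def, if_pos h]; exact hD0
      · have hpos : 0 < φ s := lt_of_le_of_ne (hφpos s) (Ne.symm h)
        simp only [hy_def, if_neg h]
        have : (φ s)⁻¹ • (G (t - s)) (f s) = (G (t - s)) ((φ s)⁻¹ • f s) := (map_smul _ _ _).symm
        rw [this]
        apply subset_closure
        apply subset_convexHull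
        apply Set.mem_insert_of_mem
        refine ⟨(G (t - s), (φ s)⁻¹ • f s), ⟨⟨t - s, ⟨?_, ?_⟩, rfl⟩, ?_⟩, rfl⟩
        · simp only [hc_def] at hsm; linarith [hsm.2]
        · linarith [hsm.1, ht.2]
        · rw [Metric.mem_closedBall, dist_zero_right, norm_smul, norm_inv, Real.norm_eq_abs,
            abs_of_pos hpos]
          rw [inv_mul_le_iff₀ hpos, mul_one]
          exact hs
    -- integrability of the original integrand w.r.t. μc
    have hint₁' : Integrable (fun s => G (t - s) (f s)) μc := hint₁
    -- integrability of y w.r.t. ν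
    have hyint : Integrable y ν := by
      rw [hν_def, integrable_withDensity_iff_integrable_smul₀ hφm]
      exact hint₁'.congr (by filter_upwards [hEq] with s hs; rw [← hs])
    -- ν is a finite measure
    have hνfin : IsFiniteMeasure ν := by
      constructor
      rw [hν_def, withDensity_apply _ MeasurableSet.univ, setLIntegral_univ]
      have hφc : Integrable φ μc := hφ.mono_measure hμc_le
      have := hφc.hasFiniteIntegral
      simp only [HasFiniteIntegral] at this
      refine lt_of_le_of_lt (lintegral_mono fun s => ?_) this
      rw [Real.toNNReal_eq_nnnorm_of_nonneg (hφpos s)]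
      exact (enorm_eq_nnnorm _).symm.le
    -- identify I₁ with ∫ y dν
    have hI₁ν : I₁ = ∫ s, y s ∂ν := by
      rw [hI₁def, hν_def]
      rw [integral_withDensity_eq_integral_smul₀ hφm y]
      exact integral_congr_ae hEq
    -- the total mass
    have hmass : (ν Set.univ).toReal = ∫ s, φ s ∂μc := by
      rw [hν_def, withDensity_apply _ MeasurableSet.univ, setLIntegral_univ]
      rw [integral_eq_lintegral_of_nonneg_ae (Filter.Eventually.of_forall fun s => hφpos s)
        ((hφ.aestronglyMeasurable).mono_measure hμc_le)]
      rfl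
    have hmass_mem : (ν Set.univ).toReal ∈ Icc (0:ℝ) CC := by
      constructor
      · exact ENNReal.toReal_nonneg
      · rw [hmass]
        have : ∫ s, φ s ∂μc = Φ c - Φ 0 := hΦd 0 c le_rfl hc0.le hcT
        rw [this, hCC_def]
        have := hΦm hcT
        have := hΦm (show (0:ℝ) ≤ 0 from le_rfl)
        linarith [hΦm hcT]
    by_cases hν0 : ν = 0
    · refine ⟨(0, 0), ⟨⟨le_rfl, hCC0⟩, hD0⟩, ?_⟩
      simp only [smul_zero]
      rw [hI₁ν, hν0]
      simp
    · haveI : NeZero ν := ⟨hν0⟩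
      have havg : ⨍ s, y s ∂ν ∈ D := hDconv.average_mem hDcpt.isClosed hyD hyint
      refine ⟨((ν Set.univ).toReal, ⨍ s, y s ∂ν), ⟨hmass_mem, havg⟩, ?_⟩
      simp only []
      rw [hI₁ν, average_eq, smul_smul]
      have hne : (ν Set.univ).toReal ≠ 0 := by
        have h1 : ν Set.univ ≠ 0 := by
          simpa [Measure.measure_univ_eq_zero] using hν0
        have h2 : ν Set.univ ≠ ⊤ := hνfin.measure_univ_lt_top.ne
        simp [ENNReal.toReal_eq_zero_iff, h1, h2]
      rw [show ν.real Set.univ = (ν Set.univ).toReal from rfl, mul_inv_cancel₀ hne, one_smul]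
  · -- tail estimate
    rw [hsplit, dist_eq_norm, add_sub_cancel_left]
    have hsub2 : Ioc c t ⊆ Icc 0 T := fun s hs => ⟨(hc0.trans hs.1).le, hs.2.trans ht.2⟩
    have hbound : ∀ᵐ s ∂(volume.restrict (Ioc c t)), ‖G (t - s) (f s)‖ ≤ M * φ s := by
      filter_upwards [ae_restrict_mem measurableSet_Ioc,
        ae_restrict_of_ae_restrict_of_subset hsub2 hfb] with s hs hfs
      calc ‖G (t - s) (f s)‖ ≤ ‖G (t - s)‖ * ‖f s‖ := (G (t-s)).le_opNorm (f s)
      _ ≤ M * φ s := mul_le_mul (hM _ ⟨by linarith [hs.2], by linarith [hs.1, ht.2]⟩)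
          hfs (norm_nonneg _) hM0
    have hφint' : Integrable (fun s => M * φ s) (volume.restrict (Ioc c t)) :=
      (hφ.mono_measure (Measure.restrict_mono hsub2 le_rfl)).const_mul M
    calc ‖∫ s in Ioc c t, G (t - s) (f s)‖ ≤ ∫ s in Ioc c t, M * φ s :=
          norm_integral_le_of_norm_le hφint' hbound
    _ = M * ∫ s in Ioc c t, φ s := integral_const_mul M _
    _ = M * (Φ t - Φ c) := by rw [hΦd c t hc0.le (by linarith) ht.2]
    _ ≤ M * (ε / (2 * (M + 1))) := by
        apply mul_le_mul_of_nonneg_left _ hM0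
        have hct : dist c t < δ₀ := by
          rw [Real.dist_eq, abs_sub_comm]
          have : t - c = δ := by simp [hc_def]
          rw [this, abs_of_pos hδpos]
          exact lt_of_le_of_lt (min_le_left _ _) (by linarith)
        have := hδ₀p hct
        rw [Real.dist_eq] at this
        have h1 : Φ c ≤ Φ t := hΦm (by linarith)
        have h2 : |Φ c - Φ t| < ε / (2 * (M + 1)) := this
        rw [abs_sub_comm] at h2
        calc Φ t - Φ c ≤ |Φ t - Φ c| := le_abs_self _
        _ ≤ ε / (2 * (M + 1)) := h2.le
    _ ≤ ε := by
        have h1 : M * (ε / (2 * (M + 1))) ≤ (M + 1) * (ε / (2 * (M + 1))) :=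
          mul_le_mul_of_nonneg_right (by linarith) (by positivity)
        have h2 : (M + 1) * (ε / (2 * (M + 1))) = ε / 2 := by field_simp
        linarith

lemma equicont_estimate {T : ℝ} {G : ℝ → W →L[ℝ] W}
    (hGnorm : ContinuousOn G (Set.Ioc 0 T))
    {M : ℝ} (hM : ∀ r ∈ Icc (0:ℝ) T, ‖G r‖ ≤ M)
    {φ : ℝ → ℝ} (hφ : Integrable φ (volume.restrict (Icc 0 T))) (hφpos : ∀ s, 0 ≤ φ s)
    {ε : ℝ} (hε : 0 < ε) :
    ∃ η > 0, ∀ f : ℝ → W, AEStronglyMeasurable f (volume.restrict (Icc 0 T)) →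
      (∀ᵐ s ∂(volume.restrict (Icc 0 T)), ‖f s‖ ≤ φ s) →
      ∀ a b : ℝ, a ∈ Icc (0:ℝ) T → b ∈ Icc (0:ℝ) T → a ≤ b → b - a < η →
      ‖(∫ s in Ioc (0:ℝ) b, G (b-s) (f s)) - ∫ s in Ioc (0:ℝ) a, G (a-s) (f s)‖ ≤ ε := by
  obtain ⟨Φ, hΦc, hΦm, hΦd⟩ := exists_primitive hφ hφpos
  by_cases hT0 : 0 ≤ T
  swap
  · -- T < 0 : Icc 0 T is empty, vacuous
    refine ⟨1, one_pos, fun f _ _ a b ha _ _ _ => absurd (ha.1.trans ha.2) hT0⟩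
  have hM0 : 0 ≤ M := le_trans (norm_nonneg (G 0)) (hM 0 ⟨le_rfl, hT0⟩)
  set CT : ℝ := Φ T - Φ 0 with hCT_def
  have hCT0 : 0 ≤ CT := by have := hΦm hT0; simp only [hCT_def]; linarith
  set ε₁ : ℝ := ε / (4 * (CT + 1)) with hε₁_def
  have hε₁pos : 0 < ε₁ := by positivity
  -- uniform continuity of Φ on [0,T]
  have hΦuc := Metric.uniformContinuousOn_iff.mp
    (isCompact_Icc.uniformContinuousOn_of_continuous (hΦc.continuousOn (s := Icc (0:ℝ) T)))
  obtain ⟨δ₁, hδ₁pos, hδ₁⟩ := hΦuc (ε / (8 * (M + 1))) (by positivity)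
  set δ' : ℝ := δ₁ / 2 with hδ'_def
  have hδ'pos : 0 < δ' := by positivity
  -- uniform continuity of G on [δ', T]
  have hGsub : Icc δ' T ⊆ Ioc 0 T := fun r hr => ⟨lt_of_lt_of_le hδ'pos hr.1, hr.2⟩
  have hGuc := Metric.uniformContinuousOn_iff.mp
    (isCompact_Icc.uniformContinuousOn_of_continuous (hGnorm.mono hGsub))
  obtain ⟨γ, hγpos, hγ⟩ := hGuc ε₁ hε₁pos
  refine ⟨min γ δ', lt_min hγpos hδ'pos, ?_⟩
  intro f hfm hfb a b ha hb hab hlt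
  set c : ℝ := max (a - δ') 0 with hc_def
  have hc0 : 0 ≤ c := le_max_right _ _
  have hca : c ≤ a := max_le (by linarith) ha.1
  have hac : a - c ≤ δ' := by
    have := le_max_left (a - δ') 0
    simp only [hc_def]; linarith [le_max_left (a - δ') 0]
  have hcT : c ≤ T := hca.trans ha.2
  -- integrability of the pieces
  have hintb : IntegrableOn (fun s => G (b - s) (f s)) (Ioc 0 b) volume :=
    integrableOn_integrand hGnorm hM hfm hφ hfb hb
  have hinta : IntegrableOn (fun s => G (a - s) (f s)) (Ioc 0 a) volume :=
    integrableOn_integrand hGnorm hM hfm hφ hfb ha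
  have hintb_c : IntegrableOn (fun s => G (b - s) (f s)) (Ioc 0 c) volume :=
    hintb.mono_set (Ioc_subset_Ioc le_rfl (hca.trans hab))
  have hintb_ca : IntegrableOn (fun s => G (b - s) (f s)) (Ioc c a) volume :=
    hintb.mono_set (Ioc_subset_Ioc hc0 hab)
  have hintb_ab : IntegrableOn (fun s => G (b - s) (f s)) (Ioc a b) volume :=
    hintb.mono_set (Ioc_subset_Ioc ha.1 le_rfl)
  have hinta_c : IntegrableOn (fun s => G (a - s) (f s)) (Ioc 0 c) volume :=
    hinta.mono_set (Ioc_subset_Ioc le_rfl hca)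
  have hinta_ca : IntegrableOn (fun s => G (a - s) (f s)) (Ioc c a) volume :=
    hinta.mono_set (Ioc_subset_Ioc hc0 le_rfl)
  -- decompose
  have hsplitb : (∫ s in Ioc (0:ℝ) b, G (b-s) (f s)) =
      ((∫ s in Ioc (0:ℝ) c, G (b-s) (f s)) + ∫ s in Ioc c a, G (b-s) (f s))
        + ∫ s in Ioc a b, G (b-s) (f s) := by
    rw [← setIntegral_union (Set.Ioc_disjoint_Ioc_of_le le_rfl) measurableSet_Ioc hintb_c hintb_ca,
      Set.Ioc_union_Ioc_eq_Ioc hc0 hca,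
      ← setIntegral_union (Set.Ioc_disjoint_Ioc_of_le le_rfl) measurableSet_Ioc
        (hintb.mono_set (Ioc_subset_Ioc le_rfl hab)) hintb_ab,
      Set.Ioc_union_Ioc_eq_Ioc ha.1 hab]
  have hsplita : (∫ s in Ioc (0:ℝ) a, G (a-s) (f s)) =
      (∫ s in Ioc (0:ℝ) c, G (a-s) (f s)) + ∫ s in Ioc c a, G (a-s) (f s) := by
    rw [← setIntegral_union (Set.Ioc_disjoint_Ioc_of_le le_rfl) measurableSet_Ioc hinta_c hinta_ca,
      Set.Ioc_union_Ioc_eq_Ioc hc0 hca]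
  have hkey : (∫ s in Ioc (0:ℝ) b, G (b-s) (f s)) - (∫ s in Ioc (0:ℝ) a, G (a-s) (f s)) =
      (∫ s in Ioc (0:ℝ) c, (G (b-s) (f s) - G (a-s) (f s)))
      + (∫ s in Ioc c a, (G (b-s) (f s) - G (a-s) (f s)))
      + ∫ s in Ioc a b, G (b-s) (f s) := by
    rw [integral_sub hintb_c hinta_c, integral_sub hintb_ca hinta_ca, hsplitb, hsplita]
    abel
  rw [hkey]
  -- bounds on the three pieces
  have hsub_c : Ioc (0:ℝ) c ⊆ Icc 0 T := fun s hs => ⟨hs.1.le, hs.2.trans hcT⟩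
  have hsub_ca : Ioc c a ⊆ Icc (0:ℝ) T := fun s hs => ⟨(hc0.trans_lt hs.1).le, hs.2.trans ha.2⟩
  have hsub_ab : Ioc a b ⊆ Icc (0:ℝ) T := fun s hs => ⟨(ha.1.trans_lt hs.1).le, hs.2.trans hb.2⟩
  -- first piece
  have h1 : ‖∫ s in Ioc (0:ℝ) c, (G (b-s) (f s) - G (a-s) (f s))‖ ≤ ε₁ * CT := by
    have hbd : ∀ᵐ s ∂(volume.restrict (Ioc (0:ℝ) c)),
        ‖G (b-s) (f s) - G (a-s) (f s)‖ ≤ ε₁ * φ s := by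
      filter_upwards [ae_restrict_mem measurableSet_Ioc,
        ae_restrict_of_ae_restrict_of_subset hsub_c hfb] with s hs hfs
      have hcpos : 0 < c := hs.1.trans_le hs.2
      have hceq : c = a - δ' := by
        rcases le_or_gt (a - δ') 0 with h1 | h1
        · exfalso
          rw [hc_def, max_eq_right h1] at hcpos
          exact lt_irrefl _ hcpos
        · rw [hc_def, max_eq_left h1.le]
      have has : a - s ∈ Icc δ' T := by
        constructor
        · have : s ≤ c := hs.2
          rw [hceq] at this; linarith
        · linarith [hs.1, ha.2]
      have hbs : b - s ∈ Icc δ' T := by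
        constructor
        · linarith [has.1]
        · linarith [hs.1, hb.2]
      have hdist : dist (b - s) (a - s) < γ := by
        rw [Real.dist_eq]
        have : b - s - (a - s) = b - a := by ring
        rw [this, abs_of_nonneg (by linarith)]
        exact lt_of_lt_of_le hlt (min_le_left _ _)
      have hGd : ‖G (b-s) - G (a-s)‖ ≤ ε₁ := by
        have := hγ _ hbs _ has hdist
        rw [dist_eq_norm] at this
        exact this.le
      calc ‖G (b-s) (f s) - G (a-s) (f s)‖ = ‖(G (b-s) - G (a-s)) (f s)‖ := by
            rw [ContinuousLinearMap.sub_apply]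
      _ ≤ ‖G (b-s) - G (a-s)‖ * ‖f s‖ := (G (b-s) - G (a-s)).le_opNorm (f s)
      _ ≤ ε₁ * φ s := mul_le_mul hGd hfs (norm_nonneg _) hε₁pos.le
    have hφc : Integrable (fun s => ε₁ * φ s) (volume.restrict (Ioc (0:ℝ) c)) :=
      (hφ.mono_measure (Measure.restrict_mono hsub_c le_rfl)).const_mul ε₁
    calc ‖∫ s in Ioc (0:ℝ) c, (G (b-s) (f s) - G (a-s) (f s))‖
        ≤ ∫ s in Ioc (0:ℝ) c, ε₁ * φ s := norm_integral_le_of_norm_le hφc hbd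
    _ = ε₁ * ∫ s in Ioc (0:ℝ) c, φ s := integral_const_mul ε₁ _
    _ = ε₁ * (Φ c - Φ 0) := by rw [hΦd 0 c le_rfl hc0 hcT]
    _ ≤ ε₁ * CT := by
        apply mul_le_mul_of_nonneg_left _ hε₁pos.le
        have := hΦm hcT
        simp only [hCT_def]; linarith
  -- second piece
  have h2 : ‖∫ s in Ioc c a, (G (b-s) (f s) - G (a-s) (f s))‖ ≤ 2 * M * (ε / (8 * (M+1))) := by
    have hbd : ∀ᵐ s ∂(volume.restrict (Ioc c a)),
        ‖G (b-s) (f s) - G (a-s) (f s)‖ ≤ 2 * M * φ s := by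
      filter_upwards [ae_restrict_mem measurableSet_Ioc,
        ae_restrict_of_ae_restrict_of_subset hsub_ca hfb] with s hs hfs
      have hbs : b - s ∈ Icc (0:ℝ) T := ⟨by linarith [hs.2], by linarith [hc0.trans_lt hs.1, hb.2]⟩
      have has : a - s ∈ Icc (0:ℝ) T := ⟨by linarith [hs.2], by linarith [hc0.trans_lt hs.1, ha.2]⟩
      calc ‖G (b-s) (f s) - G (a-s) (f s)‖ ≤ ‖G (b-s) (f s)‖ + ‖G (a-s) (f s)‖ :=
            norm_sub_le _ _
      _ ≤ ‖G (b-s)‖ * ‖f s‖ + ‖G (a-s)‖ * ‖f s‖ :=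
            add_le_add ((G (b-s)).le_opNorm _) ((G (a-s)).le_opNorm _)
      _ ≤ M * φ s + M * φ s := add_le_add
            (mul_le_mul (hM _ hbs) hfs (norm_nonneg _) hM0)
            (mul_le_mul (hM _ has) hfs (norm_nonneg _) hM0)
      _ = 2 * M * φ s := by ring
    have hφc : Integrable (fun s => 2 * M * φ s) (volume.restrict (Ioc c a)) :=
      (hφ.mono_measure (Measure.restrict_mono hsub_ca le_rfl)).const_mul (2*M)
    calc ‖∫ s in Ioc c a, (G (b-s) (f s) - G (a-s) (f s))‖
        ≤ ∫ s in Ioc c a, 2 * M * φ s := norm_integral_le_of_norm_le hφc hbd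
    _ = 2 * M * ∫ s in Ioc c a, φ s := integral_const_mul _ _
    _ = 2 * M * (Φ a - Φ c) := by rw [hΦd c a hc0 hca ha.2]
    _ ≤ 2 * M * (ε / (8 * (M+1))) := by
        apply mul_le_mul_of_nonneg_left _ (by linarith)
        have hdist : dist c a < δ₁ := by
          rw [Real.dist_eq, abs_of_nonpos (by linarith), hδ'_def] at *
          linarith
        have := hδ₁ c ⟨hc0, hcT⟩ a ha hdist
        rw [Real.dist_eq, abs_sub_comm] at this
        calc Φ a - Φ c ≤ |Φ a - Φ c| := le_abs_self _
        _ ≤ ε / (8 * (M+1)) := this.le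
  -- third piece
  have h3 : ‖∫ s in Ioc a b, G (b-s) (f s)‖ ≤ M * (ε / (8 * (M+1))) := by
    have hbd : ∀ᵐ s ∂(volume.restrict (Ioc a b)), ‖G (b-s) (f s)‖ ≤ M * φ s := by
      filter_upwards [ae_restrict_mem measurableSet_Ioc,
        ae_restrict_of_ae_restrict_of_subset hsub_ab hfb] with s hs hfs
      have hbs : b - s ∈ Icc (0:ℝ) T := ⟨by linarith [hs.2], by linarith [ha.1.trans_lt hs.1, hb.2]⟩
      calc ‖G (b-s) (f s)‖ ≤ ‖G (b-s)‖ * ‖f s‖ := (G (b-s)).le_opNorm _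
      _ ≤ M * φ s := mul_le_mul (hM _ hbs) hfs (norm_nonneg _) hM0
    have hφc : Integrable (fun s => M * φ s) (volume.restrict (Ioc a b)) :=
      (hφ.mono_measure (Measure.restrict_mono hsub_ab le_rfl)).const_mul M
    calc ‖∫ s in Ioc a b, G (b-s) (f s)‖ ≤ ∫ s in Ioc a b, M * φ s :=
          norm_integral_le_of_norm_le hφc hbd
    _ = M * ∫ s in Ioc a b, φ s := integral_const_mul _ _
    _ = M * (Φ b - Φ a) := by rw [hΦd a b ha.1 hab hb.2]
    _ ≤ M * (ε / (8 * (M+1))) := by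
        apply mul_le_mul_of_nonneg_left _ hM0
        have hdist : dist a b < δ₁ := by
          rw [Real.dist_eq, abs_of_nonpos (by linarith)]
          have : b - a < δ' := lt_of_lt_of_le hlt (min_le_right _ _)
          rw [hδ'_def] at this; linarith
        have := hδ₁ a ha b hb hdist
        rw [Real.dist_eq, abs_sub_comm] at this
        calc Φ b - Φ a ≤ |Φ b - Φ a| := le_abs_self _
        _ ≤ ε / (8 * (M+1)) := this.le
  -- combine
  have hε₁CT : ε₁ * CT ≤ ε / 4 := by
    have h1 : ε₁ * CT ≤ ε₁ * (CT + 1) := mul_le_mul_of_nonneg_left (by linarith) hε₁pos.le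
    have h2 : ε₁ * (CT + 1) = ε / 4 := by rw [hε₁_def]; field_simp
    linarith
  have hMe : 2 * M * (ε / (8 * (M+1))) ≤ ε / 4 := by
    have h1 : 2 * M * (ε / (8 * (M+1))) ≤ 2 * (M+1) * (ε / (8 * (M+1))) :=
      mul_le_mul_of_nonneg_right (by linarith) (by positivity)
    have h2 : 2 * (M+1) * (ε / (8 * (M+1))) = ε / 4 := by field_simp; ring
    linarith
  have hMe3 : M * (ε / (8 * (M+1))) ≤ ε / 8 := by
    have h1 : M * (ε / (8 * (M+1))) ≤ (M+1) * (ε / (8 * (M+1))) :=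
      mul_le_mul_of_nonneg_right (by linarith) (by positivity)
    have h2 : (M+1) * (ε / (8 * (M+1))) = ε / 8 := by field_simp
    linarith
  calc ‖(∫ s in Ioc (0:ℝ) c, (G (b-s) (f s) - G (a-s) (f s)))
      + (∫ s in Ioc c a, (G (b-s) (f s) - G (a-s) (f s)))
      + ∫ s in Ioc a b, G (b-s) (f s)‖
      ≤ ‖(∫ s in Ioc (0:ℝ) c, (G (b-s) (f s) - G (a-s) (f s)))
      + (∫ s in Ioc c a, (G (b-s) (f s) - G (a-s) (f s)))‖
      + ‖∫ s in Ioc a b, G (b-s) (f s)‖ := norm_add_le _ _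
  _ ≤ ‖(∫ s in Ioc (0:ℝ) c, (G (b-s) (f s) - G (a-s) (f s)))‖
      + ‖(∫ s in Ioc c a, (G (b-s) (f s) - G (a-s) (f s)))‖
      + ‖∫ s in Ioc a b, G (b-s) (f s)‖ := by gcongr; exact norm_add_le _ _
  _ ≤ ε₁ * CT + 2 * M * (ε / (8 * (M+1))) + M * (ε / (8 * (M+1))) := by gcongr
  _ ≤ ε / 4 + ε / 4 + ε / 8 := by gcongr <;> linarith
  _ ≤ ε := by linarith

end Stmt17Aux

/-- if `(gₙ) ⊂ L¹([0,T];W)` is integrably bounded, then the sequence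
`(𝒢 gₙ)(t) = ∫₀ᵗ G(t-s) gₙ(s) ds` is relatively compact in `C([0,T];W)`. -/
theorem stmt_17 {W : Type*}
    [NormedAddCommGroup W] [NormedSpace ℝ W] [CompleteSpace W]
    (T : ℝ) (hT : 0 < T)
    (G : ℝ → W →L[ℝ] W)
    (hGsc : ∀ w : W, ContinuousOn (fun t : ℝ => G t w) (Set.Icc 0 T))
    (hG0 : G 0 = 1)
    (hGcpt : ∀ t ∈ Set.Ioc (0 : ℝ) T, IsCompactOperator (⇑(G t)))
    (hGnorm : ContinuousOn G (Set.Ioc 0 T))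
    (g : ℕ → ℝ → W)
    (hgmeas : ∀ n : ℕ, AEStronglyMeasurable (g n) (volume.restrict (Set.Icc (0 : ℝ) T)))
    (φ : ℝ → ℝ) (hφint : Integrable φ (volume.restrict (Set.Icc (0 : ℝ) T)))
    (hφpos : ∀ t : ℝ, 0 ≤ φ t)
    (hbdd : ∀ n : ℕ, ∀ᵐ t ∂(volume.restrict (Set.Icc (0 : ℝ) T)), ‖g n t‖ ≤ φ t) :
    IsCompact (closure {F : C(Set.Icc (0 : ℝ) T, W) |
      ∃ n : ℕ, ∀ t : Set.Icc (0 : ℝ) T,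
        F t = ∫ s in (0 : ℝ)..(t : ℝ), G ((t : ℝ) - s) (g n s)}) := by
  -- uniform bound on the operator norms via Banach–Steinhaus
  obtain ⟨M, hM⟩ : ∃ M, ∀ r ∈ Icc (0:ℝ) T, ‖G r‖ ≤ M := by
    have hpb : ∀ w : W, ∃ C, ∀ i : Icc (0:ℝ) T, ‖G i w‖ ≤ C := by
      intro w
      obtain ⟨C, hC⟩ := isCompact_Icc.exists_bound_of_continuousOn (hGsc w)
      exact ⟨C, fun i => hC i i.2⟩
    obtain ⟨M, hM⟩ := banach_steinhaus hpb
    exact ⟨M, fun r hr => hM ⟨r, hr⟩⟩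
  set X := Set.Icc (0:ℝ) T
  set S : Set C(X, W) := {F : C(X, W) | ∃ n : ℕ, ∀ t : X,
      F t = ∫ s in (0 : ℝ)..(t : ℝ), G ((t : ℝ) - s) (g n s)} with hS_def
  -- closed embedding into the uniform-on-compacts function space
  have hemb : Topology.IsClosedEmbedding
      ((UniformOnFun.ofFun {K : Set X | IsCompact K}) ∘ (DFunLike.coe : C(X,W) → X → W)) := by
    refine ⟨ContinuousMap.isUniformEmbedding_toUniformOnFunIsCompact.isEmbedding, ?_⟩
    have : Set.range ((UniformOnFun.ofFun {K : Set X | IsCompact K}) ∘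
        (DFunLike.coe : C(X,W) → X → W)) =
        Set.range (ContinuousMap.toUniformOnFunIsCompact : C(X,W) → _) := rfl
    rw [this, ContinuousMap.range_toUniformOnFunIsCompact]
    exact UniformOnFun.isClosed_setOf_continuous
      CompactlyCoherentSpace.isCoherentWith
  -- equicontinuity
  have hequi : Equicontinuous (fun i : S => ((i : C(X,W)) : X → W)) := by
    intro x₀
    rw [Metric.equicontinuousAt_iff]
    intro ε hε
    obtain ⟨η, hηpos, hest⟩ := equicont_estimate (W := W) hGnorm hM hφint hφpos (half_pos hε)
    refine ⟨η, hηpos, fun x hx i => ?_⟩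
    obtain ⟨n, hn⟩ := i.2
    have hvx : (i : C(X,W)) x = ∫ s in Ioc (0:ℝ) (x:ℝ), G ((x:ℝ) - s) (g n s) := by
      rw [hn x, intervalIntegral.integral_of_le x.2.1]
    have hvx₀ : (i : C(X,W)) x₀ = ∫ s in Ioc (0:ℝ) (x₀:ℝ), G ((x₀:ℝ) - s) (g n s) := by
      rw [hn x₀, intervalIntegral.integral_of_le x₀.2.1]
    have hd : dist (x:ℝ) (x₀:ℝ) < η := by rwa [← Subtype.dist_eq]
    rcases le_total (x:ℝ) (x₀:ℝ) with hle | hle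
    · have := hest (g n) (hgmeas n) (hbdd n) (x:ℝ) (x₀:ℝ) x.2 x₀.2 hle
        (by rw [Real.dist_eq, abs_sub_comm] at hd; exact lt_of_le_of_lt (le_abs_self _) hd)
      rw [dist_eq_norm, hvx, hvx₀]
      calc ‖(∫ s in Ioc (0:ℝ) (x₀:ℝ), G ((x₀:ℝ) - s) (g n s))
          - ∫ s in Ioc (0:ℝ) (x:ℝ), G ((x:ℝ) - s) (g n s)‖ ≤ ε/2 := this
      _ < ε := half_lt_self hε
    · have := hest (g n) (hgmeas n) (hbdd n) (x₀:ℝ) (x:ℝ) x₀.2 x.2 hle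
        (by rw [Real.dist_eq] at hd; exact lt_of_le_of_lt (le_abs_self _) hd)
      rw [dist_eq_norm, hvx, hvx₀, norm_sub_rev]
      calc ‖(∫ s in Ioc (0:ℝ) (x:ℝ), G ((x:ℝ) - s) (g n s))
          - ∫ s in Ioc (0:ℝ) (x₀:ℝ), G ((x₀:ℝ) - s) (g n s)‖ ≤ ε/2 := this
      _ < ε := half_lt_self hε
  -- pointwise relative compactness
  have hpt : ∀ x : X, ∃ Q : Set W, IsCompact Q ∧ ∀ F ∈ S, F x ∈ Q := by
    intro x
    refine ⟨closure {w : W | ∃ f : ℝ → W,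
      AEStronglyMeasurable f (volume.restrict (Icc 0 T)) ∧
      (∀ᵐ s ∂(volume.restrict (Icc 0 T)), ‖f s‖ ≤ φ s) ∧
      w = ∫ s in Ioc (0:ℝ) (x:ℝ), G ((x:ℝ) - s) (f s)}, ?_, ?_⟩
    · exact TotallyBounded.isCompact_of_isClosed
        (totallyBounded_closure.mpr
          (pointwise_totallyBounded hGcpt hGnorm hM hφint hφpos x.2))
        isClosed_closure
    · rintro F ⟨n, hn⟩
      exact subset_closure ⟨g n, hgmeas n, hbdd n,
        by rw [hn x, intervalIntegral.integral_of_le x.2.1]⟩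
  exact ArzelaAscoli.isCompact_closure_of_isClosedEmbedding (fun K hK => hK) hemb
    (fun K _ => (hequi.equicontinuousOn K))
    (fun K _ x _ => hpt x)
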